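/- Let v_min, v_max be reals with 0 < v_min ≤ v_max, and let α < β and α' with β ≤ α'. Suppose times t, p, t' satisfy (β - α)/v_max ≤ p - t ≤ (β - α)/v_min and t + (α' - β)/v_max ≤ t' ≤ t + (α' - β)/v_min + (p - t). Then there exists a measurable speed signal v : [0, ∞) → [v_min, v_max] such that the trajectory x(s) = α + ∫ₜˢ v (for s ≥ t) satisfies x(p) = β; moreover any such trajectory passing through β at time p reaches α' no earlier than p + (α' - β)/v_max. -/

import Mathlib

open MeasureTheory intervalIntegral

lemma aux_intInt (vmin vmax : ℝ) (h0 : 0 < vmin) (v : ℝ → ℝ) (hm : Measurable v)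
    (hb : ∀ s, v s ∈ Set.Icc vmin vmax) (a b : ℝ) :
    IntervalIntegrable v volume a b := by
  refine (_root_.intervalIntegrable_const (c := vmax)).mono_fun hm.aestronglyMeasurable ?_
  filter_upwards with s
  have h := hb s
  have h1 : 0 ≤ v s := le_trans h0.le h.1
  simp only [Real.norm_eq_abs, abs_of_nonneg h1,
    abs_of_nonneg (le_trans h1 h.2)]
  exact h.2

/-- Realizability of a process-time window for first-order dynamics, and the
release-time lower bound for the next conflict area downstream. -/
theorem stmt_7 (vmin vmax α β α' t p t' : ℝ)
    (h0 : 0 < vmin) (hv : vmin ≤ vmax) (hαβ : α < β) (hβα' : β ≤ α')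
    (hp1 : (β - α) / vmax ≤ p - t) (hp2 : p - t ≤ (β - α) / vmin)
    (ht1 : t + (α' - β) / vmax ≤ t') (ht2 : t' ≤ t + (α' - β) / vmin + (p - t)) :
    (∃ v : ℝ → ℝ, Measurable v ∧ (∀ s, v s ∈ Set.Icc vmin vmax) ∧
        α + ∫ s in t..p, v s = β) ∧
    (∀ v : ℝ → ℝ, Measurable v → (∀ s, v s ∈ Set.Icc vmin vmax) →
        (α + ∫ s in t..p, v s = β) →
        ∀ s : ℝ, (α + ∫ σ in t..s, v σ = α') → p + (α' - β) / vmax ≤ s) := by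
  have hvmax : 0 < vmax := lt_of_lt_of_le h0 hv
  have hβα : 0 < β - α := by linarith
  have hpt : 0 < p - t := lt_of_lt_of_le (div_pos hβα hvmax) hp1
  constructor
  · refine ⟨fun _ => (β - α) / (p - t), measurable_const, fun s => ⟨?_, ?_⟩, ?_⟩
    · rw [le_div_iff₀ hpt]
      calc vmin * (p - t) ≤ vmin * ((β - α) / vmin) := by
            exact mul_le_mul_of_nonneg_left hp2 h0.le
        _ = β - α := by field_simp
    · rw [div_le_iff₀ hpt]
      calc β - α = vmax * ((β - α) / vmax) := by field_simp
        _ ≤ vmax * (p - t) := mul_le_mul_of_nonneg_left hp1 hvmax.le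
    · rw [intervalIntegral.integral_const, smul_eq_mul]
      field_simp
      ring
  · intro v hm hb hβ s hs
    have hInt : ∀ a b : ℝ, IntervalIntegrable v volume a b :=
      aux_intInt vmin vmax h0 v hm hb
    have hps : p ≤ s := by
      by_contra h
      push_neg at h
      have hsplit : (∫ σ in t..s, v σ) + ∫ σ in s..p, v σ = ∫ σ in t..p, v σ :=
        intervalIntegral.integral_add_adjacent_intervals (hInt t s) (hInt s p)
      have hlow : vmin * (p - s) ≤ ∫ σ in s..p, v σ := by
        calc vmin * (p - s) = ∫ _ in s..p, vmin := by
              rw [intervalIntegral.integral_const, smul_eq_mul, mul_comm]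
          _ ≤ ∫ σ in s..p, v σ := by
              apply intervalIntegral.integral_mono_on h.le intervalIntegrable_const (hInt s p)
              intro x _; exact (hb x).1
      have : ∫ σ in s..p, v σ = β - α' := by
        have h1 : (∫ σ in t..s, v σ) = α' - α := by linarith
        have h2 : (∫ σ in t..p, v σ) = β - α := by linarith
        linarith
      nlinarith
    -- now p ≤ s
    have hsplit : (∫ σ in t..p, v σ) + ∫ σ in p..s, v σ = ∫ σ in t..s, v σ :=
      intervalIntegral.integral_add_adjacent_intervals (hInt t p) (hInt p s)
    have hval : (∫ σ in p..s, v σ) = α' - β := by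
      have h1 : (∫ σ in t..s, v σ) = α' - α := by linarith
      have h2 : (∫ σ in t..p, v σ) = β - α := by linarith
      linarith
    have hup : (∫ σ in p..s, v σ) ≤ vmax * (s - p) := by
      calc (∫ σ in p..s, v σ) ≤ ∫ _ in p..s, vmax := by
            apply intervalIntegral.integral_mono_on hps (hInt p s) intervalIntegrable_const
            intro x _; exact (hb x).2
        _ = vmax * (s - p) := by
            rw [intervalIntegral.integral_const, smul_eq_mul, mul_comm]
    have : (α' - β) / vmax ≤ s - p := by
      rw [div_le_iff₀ hvmax]
      nlinarith
    linarith
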